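/- (Propensity score sufficiency) Let (Ω, F, P) be a probability space, T a {0,1}-valued random variable, and let H (the sigma-algebra generated by the potential outcomes) and G (the sigma-algebra generated by the covariates X) be sub-sigma-algebras of F. Let e be a G-measurable version of the conditional expectation E[T | G] (the propensity score). If E[T | H ⊔ G] = E[T | G] almost surely (conditional unconfoundedness given X), then E[T | H ⊔ σ(e)] = E[T | σ(e)] = e almost surely; that is, conditional independence of treatment and potential outcomes given X implies conditional independence given the propensity score alone. -/
import Mathlib


open MeasureTheory

/-- Propensity score sufficiency (Rosenbaum–Rubin): if treatment `T ∈ {0,1}` is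
conditionally unconfounded given the covariate sigma-algebra `G` (i.e.
`E[T | H ⊔ G] = E[T | G]` a.s., where `H` is the sigma-algebra of the potential
outcomes), and `e` is a `G`-measurable version of the propensity score `E[T | G]`,
then treatment is conditionally unconfounded given the propensity score alone:
`E[T | H ⊔ σ(e)] = E[T | σ(e)] = e` a.s. -/
theorem propensity_score_sufficiency (Ω : Type*) [m0 : MeasurableSpace Ω]
    (P : Measure Ω) [IsProbabilityMeasure P]
    (T : Ω → ℝ) (hTmeas : Measurable T) (hT01 : ∀ ω, T ω = 0 ∨ T ω = 1)
    (H G : MeasurableSpace Ω) (hH : H ≤ m0) (hG : G ≤ m0)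
    (e : Ω → ℝ) (he : StronglyMeasurable[G] e) (he_ce : e =ᵐ[P] P[T | G])
    (hU : P[T | H ⊔ G] =ᵐ[P] P[T | G]) :
    P[T | H ⊔ MeasurableSpace.comap e Real.measurableSpace] =ᵐ[P] e ∧
    P[T | MeasurableSpace.comap e Real.measurableSpace] =ᵐ[P] e := by
  set E := MeasurableSpace.comap e Real.measurableSpace with hEdef
  have hEG : E ≤ G := measurable_iff_comap_le.mp he.measurable
  have hE : E ≤ m0 := hEG.trans hG
  have heE : StronglyMeasurable[E] e :=
    (measurable_iff_comap_le.mpr le_rfl).stronglyMeasurable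
  have he_int : Integrable e P := (integrable_condExp).congr he_ce.symm
  have hHE : H ⊔ E ≤ m0 := sup_le hH hE
  have hHEHG : H ⊔ E ≤ H ⊔ G := sup_le_sup_left hEG H
  have heHE : StronglyMeasurable[H ⊔ E] e := heE.mono le_sup_right
  constructor
  · calc P[T | H ⊔ E] =ᵐ[P] P[P[T | H ⊔ G] | H ⊔ E] :=
          (condExp_condExp_of_le hHEHG (sup_le hH hG)).symm
      _ =ᵐ[P] P[P[T | G] | H ⊔ E] := condExp_congr_ae hU
      _ =ᵐ[P] P[e | H ⊔ E] := condExp_congr_ae he_ce.symm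
      _ = e := condExp_of_stronglyMeasurable hHE heHE he_int
  · calc P[T | E] =ᵐ[P] P[P[T | G] | E] := (condExp_condExp_of_le hEG hG).symm
      _ =ᵐ[P] P[e | E] := condExp_congr_ae he_ce.symm
      _ = e := condExp_of_stronglyMeasurable hE heE he_int
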